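/- For all non-negative integers n, p, q, r: ∑_{j=0}^{p} (-1)^j * C(n+p+q+1, p-j) * C(q+j, j) * s_r(n+r+q+1+j, r+q+1+j) = C(n+p+q+1, n) * r^{\overline{n}}, where r^{\overline{n}} = r(r+1)⋯(r+n-1) is the rising factorial and s_r is the unsigned r-Stirling number of the first kind. -/

import Mathlib

open Finset


/-- The unsigned `r`-Stirling number of the first kind. -/
def rStirling1 (r : ℕ) : ℕ → ℕ → ℕ
  | 0, k => if r = 0 ∧ k = 0 then 1 else 0
  | n + 1, k =>
    if n + 1 < r then 0
    else if n + 1 = r then (if k = r then 1 else 0)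
    else (if k = 0 then 0 else rStirling1 r n (k - 1)) + n * rStirling1 r n k

/-- The `r`-Stirling number of the second kind. -/
def rStirling2 (r : ℕ) : ℕ → ℕ → ℕ
  | 0, k => if r = 0 ∧ k = 0 then 1 else 0
  | n + 1, k =>
    if n + 1 < r then 0
    else if n + 1 = r then (if k = r then 1 else 0)
    else (if k = 0 then 0 else rStirling2 r n (k - 1)) + k * rStirling2 r n k


/-- Integer binomial coefficient. -/
def ich (x : ℤ) (k : ℕ) : ℤ :=
  if 0 ≤ x then ((x.toNat).choose k : ℤ)
  else (-1) ^ k * (((k + (-x).toNat - 1).choose k : ℤ))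

lemma ich_natCast (n : ℕ) (k : ℕ) : ich (n : ℤ) k = (n.choose k : ℤ) := by
  simp [ich]

lemma ich_zero (x : ℤ) : ich x 0 = 1 := by
  unfold ich; split <;> simp

lemma ich_pascal (x : ℤ) (k : ℕ) : ich x (k + 1) = ich (x - 1) (k + 1) + ich (x - 1) k := by
  rcases lt_trichotomy x 0 with hx | hx | hx
  · -- x ≤ -1
    have h1 : ¬ (0 ≤ x) := by omega
    have h2 : ¬ (0 ≤ x - 1) := by omega
    have hm : 1 ≤ (-x).toNat := by omega
    have hmx : (-(x-1)).toNat = (-x).toNat + 1 := by omega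
    unfold ich
    rw [if_neg h1, if_neg h2, if_neg h2, hmx]
    have e1 : k + 1 + (-x).toNat - 1 = k + (-x).toNat := by omega
    have e2 : k + 1 + ((-x).toNat + 1) - 1 = (k + (-x).toNat) + 1 := by omega
    have e3 : k + ((-x).toNat + 1) - 1 = k + (-x).toNat := by omega
    rw [e1, e2, e3]
    have hp : ((k + (-x).toNat) + 1).choose (k+1) = (k + (-x).toNat).choose k + (k + (-x).toNat).choose (k+1) := Nat.choose_succ_succ _ _
    rw [hp]
    push_cast
    ring
  · subst hx
    have h2 : ¬ (0 ≤ (0:ℤ) - 1) := by omega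
    unfold ich
    rw [if_pos le_rfl, if_neg h2, if_neg h2]
    have : ((0:ℤ)).toNat = 0 := rfl
    simp only [this, Nat.choose_eq_zero_of_lt (Nat.succ_pos k)]
    have hx1 : (-(0 - 1 : ℤ)).toNat = 1 := rfl
    rw [hx1]
    have e1 : k + 1 + 1 - 1 = k + 1 := by omega
    have e2 : k + 1 - 1 = k := by omega
    rw [e1, e2]
    simp [Nat.choose_self, pow_succ]
  · -- x ≥ 1
    have h1 : 0 ≤ x := le_of_lt hx
    have h2 : (0:ℤ) ≤ x - 1 := by omega
    unfold ich
    rw [if_pos h1, if_pos h2, if_pos h2]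
    have hx1 : x.toNat = (x-1).toNat + 1 := by omega
    rw [hx1]
    push_cast [Nat.choose_succ_succ]
    ring

lemma alt_sum_choose (B : ℕ) (P : ℕ) :
    ∑ i ∈ range (P + 1), (-1 : ℤ) ^ i * (B.choose i : ℤ) = (-1) ^ P * ich ((B : ℤ) - 1) P := by
  induction P with
  | zero => simp [ich_zero]
  | succ P ih =>
    rw [Finset.sum_range_succ, ih]
    have hp : ich ((B:ℤ)) (P+1) = ich ((B:ℤ) - 1) (P+1) + ich ((B:ℤ)-1) P := ich_pascal _ _
    have hB : ich ((B:ℤ)) (P+1) = (B.choose (P+1) : ℤ) := ich_natCast _ _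
    have : ich ((B:ℤ)-1) (P+1) = (B.choose (P+1) : ℤ) - ich ((B:ℤ)-1) P := by
      rw [← hB, hp]; ring
    rw [this]; ring

-- product of binomials
lemma choose_mul_choose (A i e : ℕ) :
    (A.choose i) * ((A - i).choose e) = (A.choose e) * ((A - e).choose i) := by
  by_cases h : i + e ≤ A
  · have h1 : A.choose (i+e) * (i+e).choose e = A.choose e * (A - e).choose i := by
      have := Nat.choose_mul (n := A) (k := i + e) (s := e) (Nat.le_add_left _ _)
      simpa using this
    have h2 : A.choose (i+e) * (i+e).choose i = A.choose i * (A - i).choose e := by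
      have := Nat.choose_mul (n := A) (k := i + e) (s := i) (Nat.le_add_right _ _)
      simpa using this
    have h3 : (i+e).choose e = (i+e).choose i := by
      have := Nat.choose_symm (n := i+e) (k := i) (Nat.le_add_right _ _)
      simpa using this
    rw [← h2, ← h3, h1]
  · push_neg at h
    have l : ∀ a b c : ℕ, c + b > a → (a.choose b) * ((a - b).choose c) = 0 := by
      intro a b c hc
      by_cases hb : b ≤ a
      · have : a - b < c := by omega
        rw [Nat.choose_eq_zero_of_lt this, Nat.mul_zero]
      · rw [Nat.choose_eq_zero_of_lt (by omega), Nat.zero_mul]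
    rw [l A i e (by omega), l A e i (by omega)]

lemma binid (Q : ℕ) : ∀ P M e : ℕ,
    ∑ j ∈ range (P+1), (-1:ℤ)^j * ((M+P).choose (P-j) : ℤ) * ((Q+j).choose j : ℤ) * ((M+j).choose e : ℤ)
    = ((M+P).choose e : ℤ) * ich ((M:ℤ)+P-e-Q-1) P := by
  induction Q with
  | zero =>
    intro P M e
    have hsimp : ∀ j, ((0+j : ℕ).choose j : ℤ) = 1 := by intro j; simp
    simp only [hsimp, mul_one]
    by_cases he : e ≤ M + P
    · have refl := Finset.sum_range_reflect
        (fun j => (-1:ℤ)^j * ((M+P).choose (P-j) : ℤ) * ((M+j).choose e : ℤ)) (P+1)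
      simp only [Nat.add_sub_cancel] at refl
      rw [← refl]
      have congr1 : ∀ j ∈ range (P+1),
          (-1:ℤ)^(P-j) * ((M+P).choose (P-(P-j)) : ℤ) * ((M+(P-j)).choose e : ℤ)
          = ((-1:ℤ)^P * ((M+P).choose e : ℤ)) * ((-1)^j * (((M+P-e)).choose j : ℤ)) := by
        intro j hj
        have hj' : j ≤ P := by simp [Nat.lt_succ_iff] at hj; omega
        have h2 : P - (P - j) = j := by omega
        have h3 : M + (P - j) = M + P - j := by omega
        have h4 : (-1:ℤ)^(P-j) = (-1)^P * (-1)^j := by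
          have e1 : (-1:ℤ)^(P-j) * (-1)^j = (-1)^P := by
            rw [← pow_add]; congr 1; omega
          have e2 : (-1:ℤ)^j * (-1)^j = 1 := by
            rw [← mul_pow]; norm_num
          calc (-1:ℤ)^(P-j) = (-1:ℤ)^(P-j) * ((-1)^j * (-1)^j) := by rw [e2, mul_one]
            _ = ((-1:ℤ)^(P-j) * (-1)^j) * (-1)^j := by ring
            _ = (-1)^P * (-1)^j := by rw [e1]
        have h5 := choose_mul_choose (M+P) j e
        rw [h2, h3, h4]
        have h5' : (((M+P).choose j : ℤ)) * (((M+P-j).choose e : ℤ))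
            = (((M+P).choose e : ℤ)) * (((M+P-e).choose j : ℤ)) := by exact_mod_cast h5
        calc (-1:ℤ)^P * (-1)^j * ((M+P).choose j : ℤ) * ((M+P-j).choose e : ℤ)
            = (-1:ℤ)^P * (-1)^j * (((M+P).choose j : ℤ) * ((M+P-j).choose e : ℤ)) := by ring
          _ = (-1:ℤ)^P * (-1)^j * (((M+P).choose e : ℤ) * ((M+P-e).choose j : ℤ)) := by rw [h5']
          _ = ((-1:ℤ)^P * ((M+P).choose e : ℤ)) * ((-1)^j * (((M+P-e)).choose j : ℤ)) := by ring
      rw [Finset.sum_congr rfl congr1, ← Finset.mul_sum, alt_sum_choose]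
      have hc : ((M+P-e : ℕ) : ℤ) = (M:ℤ) + P - e := by omega
      rw [hc]
      have hps : (-1:ℤ)^P * (-1)^P = 1 := by rw [← mul_pow]; norm_num
      push_cast
      simp only [sub_zero]
      linear_combination (((M+P).choose e : ℤ) * ich ((M:ℤ)+P-e-1) P) * hps
    · push_neg at he
      rw [Nat.choose_eq_zero_of_lt he]
      rw [Finset.sum_eq_zero]
      · simp
      · intro j hj
        have hj' : j ≤ P := by simp [Nat.lt_succ_iff] at hj; omega
        rw [Nat.choose_eq_zero_of_lt (by omega : M + j < e)]
        simp
  | succ Q ihQ =>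
    intro P
    induction P with
    | zero =>
      intro M e
      simp [ich_zero]
    | succ P ihP =>
      intro M e
      rw [Finset.sum_range_succ']
      have hterm : ∀ j ∈ range (P+1),
          (-1:ℤ)^(j+1) * ((M+(P+1)).choose ((P+1)-(j+1)) : ℤ) * ((Q+1+(j+1)).choose (j+1) : ℤ) * ((M+(j+1)).choose e : ℤ)
          = ((-1:ℤ)^(j+1) * ((M+(P+1)).choose (P-j) : ℤ) * ((Q+(j+1)).choose (j+1) : ℤ) * ((M+(j+1)).choose e : ℤ))
            + (-1) * ((-1:ℤ)^j * (((M+1)+P).choose (P-j) : ℤ) * ((Q+1+j).choose j : ℤ) * (((M+1)+j).choose e : ℤ)) := by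
        intro j hj
        have h1 : (P+1)-(j+1) = P - j := by omega
        have h2 : Q+1+(j+1) = (Q+(j+1)) + 1 := by ring
        have h3 : (Q+(j+1)+1).choose (j+1) = (Q+(j+1)).choose j + (Q+(j+1)).choose (j+1) :=
          Nat.choose_succ_succ _ _
        have h4 : (M+1)+P = M+(P+1) := by ring
        have h5 : (M+1)+j = M+(j+1) := by ring
        have h6 : Q+(j+1) = Q+1+j := by ring
        rw [h1, h2, h3, h4, h5]
        push_cast
        rw [h6]
        ring
      rw [Finset.sum_congr rfl hterm, Finset.sum_add_distrib]
      have hSB : ∑ j ∈ range (P+1),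
          (-1) * ((-1:ℤ)^j * (((M+1)+P).choose (P-j) : ℤ) * ((Q+1+j).choose j : ℤ) * (((M+1)+j).choose e : ℤ))
          = - (((M+(P+1)).choose e : ℤ) * ich ((M:ℤ) + ((P+1 : ℕ) : ℤ) - (e:ℤ) - (Q:ℤ) - 1 - 1) P) := by
        simp only [neg_one_mul]
        rw [Finset.sum_neg_distrib]
        have h := ihP (M+1) e
        rw [h]
        have harg : ich (((M+1 : ℕ) : ℤ) + (P:ℤ) - (e:ℤ) - ((Q+1 : ℕ) : ℤ) - 1) P
            = ich ((M:ℤ) + ((P+1 : ℕ) : ℤ) - (e:ℤ) - (Q:ℤ) - 1 - 1) P := by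
          congr 1
          push_cast
          ring
        rw [harg, show M+1+P = M+(P+1) from by omega]
      have hP1 : (∑ j ∈ range (P+1),
            (-1:ℤ)^(j+1) * ((M+(P+1)).choose (P-j):ℤ) * ((Q+(j+1)).choose (j+1):ℤ) * ((M+(j+1)).choose e:ℤ))
            + ((M+(P+1)).choose (P+1) : ℤ) * ((M).choose e : ℤ)
          = ((M+(P+1)).choose e : ℤ) * ich ((M:ℤ) + ((P+1 : ℕ) : ℤ) - (e:ℤ) - (Q:ℤ) - 1) (P+1) := by
        have h := ihQ (P+1) M e
        rw [Finset.sum_range_succ'] at h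
        have hc : ∀ j ∈ range (P+1),
            (-1:ℤ)^(j+1) * ((M+(P+1)).choose ((P+1)-(j+1)) : ℤ) * ((Q+(j+1)).choose (j+1) : ℤ) * ((M+(j+1)).choose e : ℤ)
            = (-1:ℤ)^(j+1) * ((M+(P+1)).choose (P-j):ℤ) * ((Q+(j+1)).choose (j+1):ℤ) * ((M+(j+1)).choose e:ℤ) := by
          intro j hj
          have h1 : (P+1)-(j+1) = P - j := by omega
          rw [h1]
        rw [Finset.sum_congr rfl hc] at h
        simp only [pow_zero, one_mul, Nat.sub_zero, Nat.add_zero, Nat.choose_zero_right,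
          Nat.cast_one, mul_one] at h
        linear_combination h
      rw [hSB]
      have hpas := ich_pascal ((M:ℤ) + ((P+1 : ℕ) : ℤ) - (e:ℤ) - (Q:ℤ) - 1) P
      have hg : ich ((M:ℤ) + ((P+1 : ℕ) : ℤ) - (e:ℤ) - ((Q+1 : ℕ) : ℤ) - 1) (P+1)
          = ich ((M:ℤ) + ((P+1 : ℕ) : ℤ) - (e:ℤ) - (Q:ℤ) - 1 - 1) (P+1) := by
        congr 1
        push_cast
        ring
      rw [hg]
      simp only [pow_zero, one_mul, Nat.sub_zero, Nat.add_zero, Nat.choose_zero_right,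
        Nat.cast_one, mul_one]
      linear_combination hP1 + ((M+(P+1)).choose e : ℤ) * hpas

/-- elementary symmetric e_n(r, r+1, ..., r+m-1) -/
def EE (r : ℕ) : ℕ → ℕ → ℕ
  | 0, _ => 1
  | _ + 1, 0 => 0
  | n + 1, m + 1 => EE r (n+1) m + (r + m) * EE r n m

/-- coefficients of EE in binomial basis -/
def dd (r : ℕ) : ℕ → ℕ → ℤ
  | 0, e => if e = 0 then 1 else 0
  | _ + 1, 0 => 0
  | n + 1, e + 1 => ((r : ℤ) + e) * dd r n e + (e : ℤ) * dd r n (e - 1)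

lemma EE_zero_of_lt (r : ℕ) : ∀ m n, m < n → EE r n m = 0 := by
  intro m
  induction m with
  | zero =>
    intro n h
    cases n with
    | zero => omega
    | succ n => rfl
  | succ m ih =>
    intro n h
    cases n with
    | zero => omega
    | succ n =>
      show EE r (n+1) m + (r + m) * EE r n m = 0
      rw [ih (n+1) (by omega), ih n (by omega)]
      simp

lemma EE_diag (r : ℕ) : ∀ n, EE r n n = ∏ i ∈ range n, (r + i) := by
  intro n
  induction n with
  | zero => simp [EE]
  | succ n ih =>
    show EE r (n+1) n + (r + n) * EE r n n = _
    rw [EE_zero_of_lt r n (n+1) (by omega), ih, Finset.prod_range_succ]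
    ring

lemma dd_zero_of_lt (r : ℕ) : ∀ n e, e < n → dd r n e = 0 := by
  intro n
  induction n with
  | zero => intro e h; omega
  | succ n ih =>
    intro e h
    cases e with
    | zero => rfl
    | succ e =>
      show ((r : ℤ) + e) * dd r n e + (e : ℤ) * dd r n (e - 1) = 0
      rw [ih e (by omega), ih (e-1) (by omega)]
      ring

lemma dd_zero_of_gt (r : ℕ) : ∀ n e, 2 * n < e → dd r n e = 0 := by
  intro n
  induction n with
  | zero =>
    intro e h
    have : e ≠ 0 := by omega
    simp [dd, this]
  | succ n ih =>
    intro e h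
    cases e with
    | zero => rfl
    | succ e =>
      show ((r : ℤ) + e) * dd r n e + (e : ℤ) * dd r n (e - 1) = 0
      rw [ih e (by omega), ih (e-1) (by omega)]
      ring

lemma dd_diag (r : ℕ) : ∀ n, dd r n n = ∏ i ∈ range n, ((r : ℤ) + i) := by
  intro n
  induction n with
  | zero => simp [dd]
  | succ n ih =>
    show ((r : ℤ) + n) * dd r n n + (n : ℤ) * dd r n (n - 1) = _
    have h2 : (n : ℤ) * dd r n (n-1) = 0 := by
      cases n with
      | zero => simp
      | succ n =>
        simp only [Nat.add_sub_cancel]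
        rw [dd_zero_of_lt r (n+1) n (by omega)]
        ring
    rw [ih, h2, Finset.prod_range_succ]
    ring

lemma rS_below (r : ℕ) : ∀ n k, k < r → rStirling1 r n k = 0 := by
  intro n
  induction n with
  | zero =>
    intro k h
    have : ¬ (r = 0 ∧ k = 0) := by omega
    simp [rStirling1, this]
  | succ n ih =>
    intro k h
    show (if n + 1 < r then 0
      else if n + 1 = r then (if k = r then 1 else 0)
      else (if k = 0 then 0 else rStirling1 r n (k - 1)) + n * rStirling1 r n k) = 0
    split
    · rfl
    · split
      · simp [show k ≠ r by omega]
      · rw [ih k h]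
        have : (if k = 0 then 0 else rStirling1 r n (k - 1)) = 0 := by
          split
          · rfl
          · exact ih (k-1) (by omega)
        rw [this]
        simp

lemma rS_above (r : ℕ) : ∀ n k, n < k → rStirling1 r n k = 0 := by
  intro n
  induction n with
  | zero =>
    intro k h
    have : ¬ (r = 0 ∧ k = 0) := by omega
    simp [rStirling1, this]
  | succ n ih =>
    intro k h
    show (if n + 1 < r then 0
      else if n + 1 = r then (if k = r then 1 else 0)
      else (if k = 0 then 0 else rStirling1 r n (k - 1)) + n * rStirling1 r n k) = 0
    split
    · rfl
    · split
      · simp [show k ≠ r by omega]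
      · rw [ih k (by omega), show (if k = 0 then 0 else rStirling1 r n (k - 1)) = 0 by
          split
          · rfl
          · exact ih (k-1) (by omega)]
        simp

lemma rS_diag (r : ℕ) : rStirling1 r r r = 1 := by
  cases r with
  | zero => simp [rStirling1]
  | succ s =>
    show (if s + 1 < s + 1 then 0
      else if s + 1 = s + 1 then (if s + 1 = s + 1 then 1 else 0)
      else _) = 1
    simp

lemma rS_eq_EE (r : ℕ) : ∀ m k, k ≤ m → rStirling1 r (m + r) (k + r) = EE r (m - k) m := by
  intro m
  induction m with
  | zero =>
    intro k hk
    have : k = 0 := by omega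
    subst this
    simpa [EE] using rS_diag r
  | succ m ih =>
    intro k hk
    have hstep : rStirling1 r (m + 1 + r) (k + r)
        = (if k + r = 0 then 0 else rStirling1 r (m + r) (k + r - 1)) + (m + r) * rStirling1 r (m + r) (k + r) := by
      rw [show m + 1 + r = (m + r) + 1 from by omega]
      rw [show rStirling1 r ((m+r)+1) (k+r) = (if (m+r) + 1 < r then 0
        else if (m+r) + 1 = r then (if k + r = r then 1 else 0)
        else (if k + r = 0 then 0 else rStirling1 r (m+r) (k + r - 1)) + (m+r) * rStirling1 r (m+r) (k+r)) from rfl]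
      rw [if_neg (by omega), if_neg (by omega)]
    rw [hstep]
    cases k with
    | zero =>
      have h1 : (if 0 + r = 0 then 0 else rStirling1 r (m + r) (0 + r - 1)) = 0 := by
        split
        · rfl
        · exact rS_below r (m+r) (0 + r - 1) (by omega)
      rw [h1, ih 0 (by omega)]
      simp only [Nat.sub_zero, Nat.zero_add]
      have hE : EE r (m+1) (m+1) = EE r (m+1) m + (r + m) * EE r m m := rfl
      rw [hE, EE_zero_of_lt r m (m+1) (by omega)]
      ring
    | succ k =>
      have h1 : (if k + 1 + r = 0 then 0 else rStirling1 r (m + r) (k + 1 + r - 1)) = rStirling1 r (m + r) (k + r) := by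
        rw [if_neg (by omega)]
        congr 1
        omega
      rw [h1]
      rcases Nat.lt_or_ge k m with hkm | hkm
      · -- k + 1 ≤ m
        rw [ih k (by omega), ih (k+1) (by omega)]
        have e1 : m - k = (m - (k+1)) + 1 := by omega
        have e2 : EE r ((m - (k+1)) + 1) (m + 1) = EE r ((m-(k+1))+1) m + (r + m) * EE r (m-(k+1)) m := rfl
        rw [show m + 1 - (k+1) = (m - (k+1)) + 1 from by omega, e2, ← e1]
        ring
      · -- k = m (k+1 = m+1)
        have hk1 : k = m := by omega
        subst hk1
        rw [ih k (le_refl k), rS_above r (k + r) (k + 1 + r) (by omega)]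
        simp [show k - k = 0 from by omega, show k + 1 - (k+1) = 0 from by omega, EE]

lemma choose_kernel (m e : ℕ) :
    ((e:ℤ)) * (m.choose e : ℤ) + ((e:ℤ)+1) * (m.choose (e+1) : ℤ) = (m:ℤ) * (m.choose e : ℤ) := by
  rcases le_or_gt e m with h | h
  · have hn : m.choose (e+1) * (e+1) = m.choose e * (m - e) := Nat.choose_succ_right_eq m e
    have hc : ((m - e : ℕ) : ℤ) = (m:ℤ) - e := by omega
    have h2 : ((m.choose (e+1) : ℤ)) * ((e:ℤ)+1) = (m.choose e : ℤ) * ((m - e : ℕ) : ℤ) := by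
      exact_mod_cast hn
    rw [hc] at h2
    linarith [h2]
  · rw [Nat.choose_eq_zero_of_lt h, Nat.choose_eq_zero_of_lt (by omega)]
    simp

lemma EE_expand (r : ℕ) : ∀ n m, (EE r n m : ℤ) = ∑ e ∈ range (2*n+1), dd r n e * (m.choose e : ℤ) := by
  intro n
  induction n with
  | zero =>
    intro m
    simp [EE, dd]
  | succ n ih =>
    intro m
    induction m with
    | zero =>
      show ((0:ℕ) : ℤ) = _
      rw [Finset.sum_eq_zero]
      · simp
      · intro e he
        cases e with
        | zero => show dd r (n+1) 0 * _ = 0; rw [show dd r (n+1) 0 = 0 from rfl]; ring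
        | succ e => rw [Nat.choose_eq_zero_of_lt (by omega)]; simp
    | succ m ihm =>
      have hrec : (EE r (n+1) (m+1) : ℤ) = (EE r (n+1) m : ℤ) + ((r:ℤ) + m) * (EE r n m : ℤ) := by
        show ((EE r (n+1) m + (r + m) * EE r n m : ℕ) : ℤ) = _
        push_cast
        ring
      rw [hrec, ihm, ih m]
      -- goal: ∑_e dd (n+1) e C(m,e) + (r+m) ∑_e dd n e C(m,e) = ∑_e dd (n+1) e C(m+1,e)
      have key : ∑ e ∈ range (2*(n+1)+1), dd r (n+1) e * ((m+1).choose e : ℤ)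
          - ∑ e ∈ range (2*(n+1)+1), dd r (n+1) e * (m.choose e : ℤ)
          = ((r:ℤ) + m) * ∑ e ∈ range (2*n+1), dd r n e * (m.choose e : ℤ) := by
        rw [← Finset.sum_sub_distrib]
        have hdiff : ∀ e ∈ range (2*(n+1)+1),
            dd r (n+1) e * ((m+1).choose e : ℤ) - dd r (n+1) e * (m.choose e : ℤ)
            = dd r (n+1) e * (if e = 0 then 0 else (m.choose (e-1) : ℤ)) := by
          intro e he
          cases e with
          | zero => simp
          | succ e =>
            rw [if_neg (by omega)]
            have : (m+1).choose (e+1) = m.choose e + m.choose (e+1) := Nat.choose_succ_succ m e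
            rw [this]
            push_cast
            ring
        rw [Finset.sum_congr rfl hdiff]
        -- shift the sum
        rw [Finset.sum_range_succ']
        simp only [reduceIte, mul_zero, add_zero]
        have hbody : ∀ e ∈ range (2*(n+1)),
            dd r (n+1) (e+1) * (if e + 1 = 0 then 0 else (m.choose (e+1-1) : ℤ))
            = (((r:ℤ) + e) * dd r n e + (e:ℤ) * dd r n (e-1)) * (m.choose e : ℤ) := by
          intro e he
          rw [if_neg (by omega), show e + 1 - 1 = e from rfl]
          rw [show dd r (n+1) (e+1) = ((r : ℤ) + e) * dd r n e + (e : ℤ) * dd r n (e - 1) from rfl]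
        rw [Finset.sum_congr rfl hbody]
        -- split into three sums
        have hsplit : ∀ e ∈ range (2*(n+1)),
            (((r:ℤ) + e) * dd r n e + (e:ℤ) * dd r n (e-1)) * (m.choose e : ℤ)
            = ((r:ℤ)) * (dd r n e * (m.choose e : ℤ))
              + ((e:ℤ) * dd r n e * (m.choose e : ℤ) + (e:ℤ) * dd r n (e-1) * (m.choose e : ℤ)) := by
          intro e he
          ring
        rw [Finset.sum_congr rfl hsplit, Finset.sum_add_distrib, ← Finset.mul_sum,
          Finset.sum_add_distrib]
        -- first sum: drop top term
        have h1 : ∑ e ∈ range (2*(n+1)), dd r n e * (m.choose e : ℤ)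
            = ∑ e ∈ range (2*n+1), dd r n e * (m.choose e : ℤ) := by
          rw [show 2*(n+1) = (2*n+1) + 1 from by ring, Finset.sum_range_succ,
            dd_zero_of_gt r n (2*n+1) (by omega)]
          ring
        -- second pair: combine to m * ∑
        have h2 : ∑ e ∈ range (2*(n+1)), (e:ℤ) * dd r n e * (m.choose e : ℤ)
              + ∑ e ∈ range (2*(n+1)), (e:ℤ) * dd r n (e-1) * (m.choose e : ℤ)
            = (m:ℤ) * ∑ e ∈ range (2*n+1), dd r n e * (m.choose e : ℤ) := by
          have h2a : ∑ e ∈ range (2*(n+1)), (e:ℤ) * dd r n e * (m.choose e : ℤ)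
              = ∑ e ∈ range (2*n+1), (e:ℤ) * dd r n e * (m.choose e : ℤ) := by
            rw [show 2*(n+1) = (2*n+1) + 1 from by ring, Finset.sum_range_succ,
              dd_zero_of_gt r n (2*n+1) (by omega)]
            ring
          have h2b : ∑ e ∈ range (2*(n+1)), (e:ℤ) * dd r n (e-1) * (m.choose e : ℤ)
              = ∑ e ∈ range (2*n+1), ((e:ℤ)+1) * dd r n e * (m.choose (e+1) : ℤ) := by
            rw [show 2*(n+1) = (2*n+1) + 1 from by ring]
            rw [Finset.sum_range_succ']
            simp only [Nat.cast_zero, zero_mul, mul_zero, add_zero]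
            apply Finset.sum_congr rfl
            intro e he
            rw [show e + 1 - 1 = e from rfl]
            push_cast
            ring
          rw [h2a, h2b, ← Finset.sum_add_distrib, Finset.mul_sum]
          apply Finset.sum_congr rfl
          intro e he
          linear_combination (dd r n e) * (choose_kernel m e)
        rw [h1, h2]
        ring
      linarith [key]


theorem rStirling1_rising_factorial_identity (n p q r : ℕ) (hp : n ≤ p) :
    ∑ j ∈ Finset.range (p + 1),
      (-1 : ℤ) ^ j * ((n + p + q + 1).choose (p - j)) * ((q + j).choose j) *
        rStirling1 r (n + r + q + 1 + j) (r + q + 1 + j)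
    = ((n + p + q + 1).choose n : ℤ) * ∏ i ∈ Finset.range n, ((r : ℤ) + i) := by
  have hst : ∀ j, (rStirling1 r (n+r+q+1+j) (r+q+1+j) : ℤ)
      = ∑ e ∈ range (2*n+1), dd r n e * ((n+q+1+j).choose e : ℤ) := by
    intro j
    have h1 : rStirling1 r ((n+q+1+j) + r) ((q+1+j) + r) = EE r ((n+q+1+j) - (q+1+j)) (n+q+1+j) :=
      rS_eq_EE r _ _ (by omega)
    rw [show n+r+q+1+j = (n+q+1+j) + r from by ring, show r+q+1+j = (q+1+j) + r from by ring, h1,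
      show (n+q+1+j) - (q+1+j) = n from by omega]
    exact EE_expand r n (n+q+1+j)
  rw [show n+p+q+1 = n+q+1+p from by ring]
  calc ∑ j ∈ Finset.range (p + 1),
      (-1 : ℤ) ^ j * ((n + q + 1 + p).choose (p - j)) * ((q + j).choose j) *
        (rStirling1 r (n + r + q + 1 + j) (r + q + 1 + j) : ℤ)
      = ∑ j ∈ range (p+1), ∑ e ∈ range (2*n+1),
          dd r n e * ((-1:ℤ)^j * ((n+q+1+p).choose (p-j) : ℤ) * ((q+j).choose j : ℤ) * ((n+q+1+j).choose e : ℤ)) := by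
        apply Finset.sum_congr rfl
        intro j hj
        rw [hst j, Finset.mul_sum]
        apply Finset.sum_congr rfl
        intro e he
        ring
    _ = ∑ e ∈ range (2*n+1), dd r n e * ∑ j ∈ range (p+1),
          ((-1:ℤ)^j * ((n+q+1+p).choose (p-j) : ℤ) * ((q+j).choose j : ℤ) * ((n+q+1+j).choose e : ℤ)) := by
        rw [Finset.sum_comm]
        apply Finset.sum_congr rfl
        intro e he
        rw [Finset.mul_sum]
    _ = ∑ e ∈ range (2*n+1), dd r n e * (((n+q+1+p).choose e : ℤ) * ich (((n+q+1 : ℕ) : ℤ) + p - e - q - 1) p) := by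
        apply Finset.sum_congr rfl
        intro e he
        rw [binid q p (n+q+1) e]
    _ = ((n + q + 1 + p).choose n : ℤ) * ∏ i ∈ Finset.range n, ((r : ℤ) + i) := by
        rw [Finset.sum_eq_single n]
        · rw [dd_diag r n]
          have harg : ((n+q+1 : ℕ) : ℤ) + p - n - q - 1 = ((p : ℕ) : ℤ) := by push_cast; ring
          rw [harg, ich_natCast, Nat.choose_self]
          push_cast
          ring
        · intro e he hne
          rcases Nat.lt_or_ge e n with hlt | hge
          · rw [dd_zero_of_lt r n e hlt]
            ring
          · have hgt : n < e := by omega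
            have he' : e ≤ 2*n := by simp [Finset.mem_range] at he; omega
            have harg : ((n+q+1 : ℕ) : ℤ) + p - e - q - 1 = ((n + p - e : ℕ) : ℤ) := by
              push_cast [show e ≤ n + p from by omega]
              ring
            rw [harg, ich_natCast, Nat.choose_eq_zero_of_lt (show n + p - e < p from by omega)]
            simp
        · intro hn
          exfalso
          apply hn
          simp [Finset.mem_range]
          omega
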